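/- Let c_n(i,j), 1 ≤ i,j ≤ n, be a real array and define g_n(i,j) = c_n(i,j) - n^{-1} Σ_i c_n(i,j) - n^{-1} Σ_j c_n(i,j) + n^{-2} Σ_{i,j} c_n(i,j). Then for a uniform random permutation π, Var_π[Σ_i c_n(i, π(i))] = (1/(n-1)) Σ_{i=1}^n Σ_{j=1}^n g_n(i,j)^2. -/

import Mathlib

open Finset

section HoeffdingAux
open Equiv

lemma sum_comb {ι : Type*} (s : Finset ι) (f g h k : ι → ℝ) (a b : ℝ) :
    ∑ x ∈ s, (f x - a * g x - a * h x + b * k x)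
      = (∑ x ∈ s, f x) - a * (∑ x ∈ s, g x) - a * (∑ x ∈ s, h x) + b * (∑ x ∈ s, k x) := by
  rw [Finset.mul_sum, Finset.mul_sum, Finset.mul_sum, ← Finset.sum_sub_distrib,
    ← Finset.sum_sub_distrib, ← Finset.sum_add_distrib]

lemma rhs_expand {n : ℕ} (hn0 : (n : ℝ) ≠ 0) (c : Fin n → Fin n → ℝ) :
    ∑ i, ∑ j, (c i j - (n : ℝ)⁻¹ * ∑ i', c i' j - (n : ℝ)⁻¹ * ∑ j', c i j'
        + ((n : ℝ) ^ 2)⁻¹ * ∑ i', ∑ j', c i' j') ^ 2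
      = (∑ i, ∑ j, (c i j) ^ 2) - (n : ℝ)⁻¹ * (∑ j, (∑ i, c i j) ^ 2)
        - (n : ℝ)⁻¹ * (∑ i, (∑ j, c i j) ^ 2)
        + ((n : ℝ) ^ 2)⁻¹ * (∑ i, ∑ j, c i j) ^ 2 := by
  classical
  set a : ℝ := (n : ℝ)⁻¹ with ha
  set b : ℝ := ((n : ℝ) ^ 2)⁻¹ with hb
  set A : ℝ := ∑ i, ∑ j, c i j with hA
  have hna : (n : ℝ) * a = 1 := by rw [ha]; exact mul_inv_cancel₀ hn0
  have hb' : b = a * a := by rw [ha, hb, sq, mul_inv]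
  set X : Fin n → Fin n → ℝ :=
    fun i j => c i j - a * ∑ i', c i' j - a * ∑ j', c i j' + b * A with hX
  have hrow : ∀ i, ∑ j, X i j = 0 := by
    intro i
    simp only [hX]
    rw [sum_comb, Finset.sum_comm, ← hA, Finset.sum_const, Finset.sum_const,
      Finset.card_univ, Fintype.card_fin, nsmul_eq_mul, nsmul_eq_mul]
    linear_combination (a * A - ∑ j, c i j) * hna + (n : ℝ) * A * hb'
  have hcol : ∀ j, ∑ i, X i j = 0 := by
    intro j
    simp only [hX]
    rw [sum_comb, ← hA, Finset.sum_const, Finset.sum_const,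
      Finset.card_univ, Fintype.card_fin, nsmul_eq_mul, nsmul_eq_mul]
    linear_combination (a * A - ∑ i, c i j) * hna + (n : ℝ) * A * hb'
  show ∑ i, ∑ j, X i j ^ 2 = _
  have h1 : ∑ i, ∑ j, X i j ^ 2 = ∑ i, ∑ j, X i j * c i j := by
    have hz : ∑ i, ∑ j, (X i j ^ 2 - X i j * c i j) = 0 := by
      have per_i : ∀ i : Fin n, ∑ j, (X i j ^ 2 - X i j * c i j)
          = ∑ j, (-(a * ((∑ i', c i' j) * X i j))) := by
        intro i
        have e1 : ∀ j, X i j ^ 2 - X i j * c i j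
            = -(a * ((∑ i', c i' j) * X i j)) + (-(a * ∑ j', c i j') + b * A) * X i j := by
          intro j; simp only [hX]; ring
        rw [Finset.sum_congr rfl fun j _ => e1 j, Finset.sum_add_distrib,
          ← Finset.mul_sum, hrow i]
        simp
      rw [Finset.sum_congr rfl fun i _ => per_i i, Finset.sum_comm]
      apply Finset.sum_eq_zero
      intro j _
      rw [Finset.sum_neg_distrib, ← Finset.mul_sum, ← Finset.mul_sum, hcol j]
      simp
    rw [Finset.sum_congr rfl fun (i : Fin n) _ =>
      (Finset.sum_sub_distrib (f := fun j => X i j ^ 2) (g := fun j => X i j * c i j)),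
      Finset.sum_sub_distrib] at hz
    exact sub_eq_zero.mp hz
  rw [h1]
  have e2 : ∀ i j, X i j * c i j
      = c i j ^ 2 - a * ((∑ i', c i' j) * c i j) - a * ((∑ j', c i j') * c i j)
        + b * (A * c i j) := by
    intro i j; simp only [hX]; ring
  rw [Finset.sum_congr rfl fun (i : Fin n) _ => by
    rw [Finset.sum_congr rfl fun j _ => e2 i j, sum_comb]]
  rw [sum_comb]
  have t1 : ∑ i, ∑ j, ((∑ i', c i' j) * c i j) = ∑ j, (∑ i, c i j) ^ 2 := by
    rw [Finset.sum_comm]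
    exact Finset.sum_congr rfl fun j _ => by rw [← Finset.mul_sum, sq]
  have t2 : ∑ i, ∑ j, ((∑ j', c i j') * c i j) = ∑ i, (∑ j, c i j) ^ 2 :=
    Finset.sum_congr rfl fun i _ => by rw [← Finset.mul_sum, sq]
  have t3 : ∑ i, ∑ j, (A * c i j) = A ^ 2 := by
    calc ∑ i, ∑ j, (A * c i j) = ∑ i, A * ∑ j, c i j :=
          Finset.sum_congr rfl fun i _ => (Finset.mul_sum _ _ _).symm
      _ = A * ∑ i, ∑ j, c i j := (Finset.mul_sum _ _ _).symm
      _ = A ^ 2 := by rw [← hA, sq]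
  rw [t1, t2, t3]

lemma offDiag_split {n : ℕ} (f : Fin n → Fin n → ℝ) :
    ∑ p ∈ (Finset.univ : Finset (Fin n)).offDiag, f p.1 p.2
      = (∑ i, ∑ k, f i k) - ∑ i, f i i := by
  have h : ∑ p ∈ (Finset.univ : Finset (Fin n)).diag, f p.1 p.2
        + ∑ p ∈ (Finset.univ : Finset (Fin n)).offDiag, f p.1 p.2
      = ∑ p ∈ (Finset.univ : Finset (Fin n)) ×ˢ Finset.univ, f p.1 p.2 := by
    rw [← Finset.sum_union (Finset.disjoint_diag_offDiag _), Finset.diag_union_offDiag]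
  rw [Finset.sum_product] at h
  rw [Finset.sum_diag] at h
  linarith [h]

lemma T_expand {n : ℕ} (c : Fin n → Fin n → ℝ) :
    ∑ p ∈ (Finset.univ : Finset (Fin n)).offDiag,
        ∑ q ∈ (Finset.univ : Finset (Fin n)).offDiag, c p.1 q.1 * c p.2 q.2
      = (∑ i, ∑ j, c i j) ^ 2 - ∑ i, (∑ j, c i j) ^ 2 - ∑ j, (∑ i, c i j) ^ 2
        + ∑ i, ∑ j, (c i j) ^ 2 := by
  have inner : ∀ p : Fin n × Fin n,
      ∑ q ∈ (Finset.univ : Finset (Fin n)).offDiag, c p.1 q.1 * c p.2 q.2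
        = (∑ j, c p.1 j) * (∑ j, c p.2 j) - ∑ j, c p.1 j * c p.2 j := by
    intro p
    rw [offDiag_split (fun j l => c p.1 j * c p.2 l), Finset.sum_mul_sum]
  rw [Finset.sum_congr rfl fun p _ => inner p,
    offDiag_split (fun i k => (∑ j, c i j) * (∑ j, c k j) - ∑ j, c i j * c k j)]
  have u1 : ∑ i, ∑ k, ((∑ j, c i j) * (∑ j, c k j) - ∑ j, c i j * c k j)
      = (∑ i, ∑ j, c i j) ^ 2 - ∑ j, (∑ i, c i j) ^ 2 := by
    rw [Finset.sum_congr rfl fun (i : Fin n) _ => Finset.sum_sub_distrib _ _,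
      Finset.sum_sub_distrib]
    congr 1
    · rw [← Finset.sum_mul_sum, sq]
    · rw [Finset.sum_congr rfl fun (i : Fin n) _ => Finset.sum_comm, Finset.sum_comm]
      exact Finset.sum_congr rfl fun j _ => by rw [← Finset.sum_mul_sum, sq]
  have u2 : ∑ i, ((∑ j, c i j) * (∑ j, c i j) - ∑ j, c i j * c i j)
      = ∑ i, (∑ j, c i j) ^ 2 - ∑ i, ∑ j, (c i j) ^ 2 := by
    rw [Finset.sum_sub_distrib]
    congr 1
    · exact Finset.sum_congr rfl fun i _ => (sq _).symm
    · exact Finset.sum_congr rfl fun i _ => Finset.sum_congr rfl fun j _ => (sq _).symm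
  rw [u1, u2]
  ring

lemma sum_perm_one {n : ℕ} (i : Fin n) (f : Fin n → ℝ) :
    (n : ℝ) * ∑ π : Equiv.Perm (Fin n), f (π i) = (n.factorial : ℝ) * ∑ j, f j := by
  classical
  set fib : Fin n → Finset (Equiv.Perm (Fin n)) :=
    fun j => Finset.univ.filter (fun π => π i = j) with hfibdef
  have hfib : ∀ j j', (fib j).card = (fib j').card := by
    intro j j'
    apply Finset.card_bij' (fun π _ => Equiv.swap j j' * π) (fun π _ => Equiv.swap j j' * π)
    · intro π hπ
      simp only [hfibdef, Finset.mem_filter, Finset.mem_univ, true_and] at hπ ⊢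
      simp [hπ]
    · intro π hπ
      simp only [hfibdef, Finset.mem_filter, Finset.mem_univ, true_and] at hπ ⊢
      simp [hπ]
    · intro π _; simp [← mul_assoc]
    · intro π _; simp [← mul_assoc]
  have hcount : n * (fib i).card = n.factorial := by
    have h1 : (Finset.univ : Finset (Equiv.Perm (Fin n))).card = ∑ j, (fib j).card :=
      Finset.card_eq_sum_card_fiberwise (fun π _ => Finset.mem_univ (π i))
    have h2 : ∑ j : Fin n, (fib j).card = n * (fib i).card := by
      rw [Finset.sum_congr rfl (fun j _ => hfib j i)]
      simp [mul_comm]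
    rw [h2] at h1
    rw [← h1]
    simp [Fintype.card_perm]
  have hsum : ∑ π : Equiv.Perm (Fin n), f (π i) = ∑ j, ((fib j).card : ℝ) * f j := by
    have hf := Finset.sum_fiberwise Finset.univ (fun π : Equiv.Perm (Fin n) => π i)
      (fun π => f (π i))
    rw [← hf]
    refine Finset.sum_congr rfl fun j _ => ?_
    have h3 : ∑ π ∈ Finset.univ.filter (fun π : Equiv.Perm (Fin n) => π i = j), f (π i)
        = ∑ π ∈ Finset.univ.filter (fun π : Equiv.Perm (Fin n) => π i = j), f j :=
      Finset.sum_congr rfl (fun π hπ => by rw [(Finset.mem_filter.mp hπ).2])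
    rw [h3, Finset.sum_const, hfibdef]
    simp [mul_comm]
  rw [hsum, Finset.mul_sum, Finset.mul_sum]
  refine Finset.sum_congr rfl fun j _ => ?_
  rw [hfib j i, ← mul_assoc, ← Nat.cast_mul, hcount]

lemma exists_perm_two {α : Type*} [DecidableEq α] {j l j' l' : α} (h : j ≠ l) (h' : j' ≠ l') :
    ∃ σ : Equiv.Perm α, σ j = j' ∧ σ l = l' := by
  have key : j' ≠ Equiv.swap j j' l := by
    by_cases hjj : j = j'
    · subst hjj; rw [Equiv.swap_self]; simpa using h
    · by_cases hl : l = j'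
      · subst hl; rw [Equiv.swap_apply_right]; exact Ne.symm hjj
      · rw [Equiv.swap_apply_of_ne_of_ne (Ne.symm h) hl]; exact Ne.symm hl
  refine ⟨(Equiv.swap j j').trans (Equiv.swap (Equiv.swap j j' l) l'), ?_, ?_⟩
  · simp only [Equiv.trans_apply, Equiv.swap_apply_left]
    exact Equiv.swap_apply_of_ne_of_ne key h'
  · simp only [Equiv.trans_apply, Equiv.swap_apply_left]

lemma sum_perm_two {n : ℕ} {i k : Fin n} (hik : i ≠ k) (F : Fin n → Fin n → ℝ) :
    ((n * n - n : ℕ) : ℝ) * ∑ π : Equiv.Perm (Fin n), F (π i) (π k)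
      = (n.factorial : ℝ) * ∑ p ∈ (Finset.univ : Finset (Fin n)).offDiag, F p.1 p.2 := by
  classical
  set fib : Fin n × Fin n → Finset (Equiv.Perm (Fin n)) :=
    fun p => Finset.univ.filter (fun π => (π i, π k) = p) with hfibdef
  have hmem : ∀ (p : Fin n × Fin n) (π : Equiv.Perm (Fin n)),
      π ∈ fib p ↔ π i = p.1 ∧ π k = p.2 := by
    intro p π
    simp [hfibdef, Prod.ext_iff]
  have hempty : ∀ p : Fin n × Fin n, p.1 = p.2 → fib p = ∅ := by
    intro p hp
    rw [Finset.eq_empty_iff_forall_notMem]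
    intro π hπ
    rw [hmem] at hπ
    exact hik (π.injective (by rw [hπ.1, hπ.2, hp]))
  have hfib : ∀ p p' : Fin n × Fin n, p.1 ≠ p.2 → p'.1 ≠ p'.2 →
      (fib p).card = (fib p').card := by
    intro p p' hp hp'
    obtain ⟨σ, hσ1, hσ2⟩ := exists_perm_two hp hp'
    apply Finset.card_bij' (fun π _ => σ * π) (fun π _ => σ⁻¹ * π)
    · intro π hπ
      rw [hmem] at hπ ⊢
      simp [hπ.1, hπ.2, hσ1, hσ2]
    · intro π hπ
      rw [hmem] at hπ ⊢
      constructor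
      · simp [Equiv.Perm.mul_apply, hπ.1, ← hσ1]
      · simp [Equiv.Perm.mul_apply, hπ.2, ← hσ2]
    · intro π _; simp [← mul_assoc]
    · intro π _; simp [← mul_assoc]
  -- total count
  have hsplit : ∀ g : Fin n × Fin n → ℕ, (∀ p, p.1 = p.2 → g p = 0) →
      ∑ p : Fin n × Fin n, g p = ∑ p ∈ (Finset.univ : Finset (Fin n)).offDiag, g p := by
    intro g hg
    rw [← Finset.univ_product_univ, ← Finset.diag_union_offDiag,
      Finset.sum_union (Finset.disjoint_diag_offDiag _)]
    have : ∑ p ∈ (Finset.univ : Finset (Fin n)).diag, g p = 0 := by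
      apply Finset.sum_eq_zero
      intro p hp
      exact hg _ (Finset.mem_diag.mp hp).2
    rw [this, zero_add]
  have hsplitR : ∀ g : Fin n × Fin n → ℝ, (∀ p, p.1 = p.2 → g p = 0) →
      ∑ p : Fin n × Fin n, g p = ∑ p ∈ (Finset.univ : Finset (Fin n)).offDiag, g p := by
    intro g hg
    rw [← Finset.univ_product_univ, ← Finset.diag_union_offDiag,
      Finset.sum_union (Finset.disjoint_diag_offDiag _)]
    have : ∑ p ∈ (Finset.univ : Finset (Fin n)).diag, g p = 0 := by
      apply Finset.sum_eq_zero
      intro p hp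
      exact hg _ (Finset.mem_diag.mp hp).2
    rw [this, zero_add]
  have hcount : (n * n - n) * (fib (i, k)).card = n.factorial := by
    have h1 : (Finset.univ : Finset (Equiv.Perm (Fin n))).card
        = ∑ p : Fin n × Fin n, (fib p).card :=
      Finset.card_eq_sum_card_fiberwise (fun π _ => Finset.mem_univ (π i, π k))
    rw [hsplit _ (fun p hp => by rw [hempty p hp, Finset.card_empty])] at h1
    have h2 : ∑ p ∈ (Finset.univ : Finset (Fin n)).offDiag, (fib p).card
        = (Finset.univ : Finset (Fin n)).offDiag.card * (fib (i, k)).card := by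
      rw [Finset.sum_congr rfl (fun p hp => hfib p (i, k)
        (Finset.mem_offDiag.mp hp).2.2 hik), Finset.sum_const, smul_eq_mul]
    rw [h2] at h1
    have h3 : (Finset.univ : Finset (Fin n)).offDiag.card = n * n - n := by
      rw [Finset.offDiag_card]
      simp
    rw [h3] at h1
    rw [← h1]
    simp [Fintype.card_perm]
  have hsum : ∑ π : Equiv.Perm (Fin n), F (π i) (π k)
      = ∑ p : Fin n × Fin n, ((fib p).card : ℝ) * F p.1 p.2 := by
    have hf := Finset.sum_fiberwise Finset.univ
      (fun π : Equiv.Perm (Fin n) => (π i, π k)) (fun π => F (π i) (π k))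
    rw [← hf]
    refine Finset.sum_congr rfl fun p _ => ?_
    have h3 : ∑ π ∈ Finset.univ.filter (fun π : Equiv.Perm (Fin n) => (π i, π k) = p),
          F (π i) (π k)
        = ∑ π ∈ Finset.univ.filter (fun π : Equiv.Perm (Fin n) => (π i, π k) = p),
          F p.1 p.2 := by
      refine Finset.sum_congr rfl fun π hπ => ?_
      have := (Finset.mem_filter.mp hπ).2
      rw [← this]
    rw [h3, Finset.sum_const, hfibdef]
    simp [mul_comm]
  rw [hsum]
  rw [hsplitR _ (fun p hp => by rw [hempty p hp]; simp)]
  rw [Finset.mul_sum, Finset.mul_sum]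
  refine Finset.sum_congr rfl fun p hp => ?_
  rw [hfib p (i, k) (Finset.mem_offDiag.mp hp).2.2 hik, ← mul_assoc, ← Nat.cast_mul, hcount]

end HoeffdingAux

/-- Variance formula in Hoeffding's combinatorial CLT:
`Var_π[∑ i, c (i, π i)] = (n-1)⁻¹ ∑_{i,j} g(i,j)²` where `g` is the doubly-centered array. -/
theorem stmt2 (n : ℕ) (hn : 2 ≤ n) (c : Fin n → Fin n → ℝ) :
    (Nat.factorial n : ℝ)⁻¹ * ∑ π : Equiv.Perm (Fin n),
        ((∑ i, c i (π i)) -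
          (Nat.factorial n : ℝ)⁻¹ * ∑ π' : Equiv.Perm (Fin n), ∑ i, c i (π' i)) ^ 2
      = ((n : ℝ) - 1)⁻¹ * ∑ i, ∑ j,
          (c i j - (n : ℝ)⁻¹ * ∑ i', c i' j - (n : ℝ)⁻¹ * ∑ j', c i j'
              + ((n : ℝ) ^ 2)⁻¹ * ∑ i', ∑ j', c i' j') ^ 2 := by
  classical
  have hn2 : (2 : ℝ) ≤ (n : ℝ) := by exact_mod_cast hn
  have hn0 : (n : ℝ) ≠ 0 := by intro h; rw [h] at hn2; linarith
  have hn1 : (n : ℝ) - 1 ≠ 0 := by intro h; nlinarith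
  have hN : (n.factorial : ℝ) ≠ 0 := Nat.cast_ne_zero.mpr (Nat.factorial_ne_zero n)
  rw [rhs_expand hn0 c]
  set N : ℝ := (n.factorial : ℝ) with hNdef
  set SP : ℝ := ∑ π' : Equiv.Perm (Fin n), ∑ i, c i (π' i) with hSPdef
  set A : ℝ := ∑ i, ∑ j, c i j with hAdef
  set B : ℝ := ∑ i, ∑ j, (c i j) ^ 2 with hBdef
  set P : ℝ := ∑ i, (∑ j, c i j) ^ 2 with hPdef
  set Q : ℝ := ∑ j, (∑ i, c i j) ^ 2 with hQdef
  set F1 : ℝ := ∑ π : Equiv.Perm (Fin n), ∑ i, (c i (π i)) ^ 2 with hF1def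
  set F2 : ℝ := ∑ π : Equiv.Perm (Fin n), ∑ p ∈ (Finset.univ : Finset (Fin n)).offDiag,
    c p.1 (π p.1) * c p.2 (π p.2) with hF2def
  set T : ℝ := ∑ p ∈ (Finset.univ : Finset (Fin n)).offDiag,
    ∑ q ∈ (Finset.univ : Finset (Fin n)).offDiag, c p.1 q.1 * c p.2 q.2 with hTdef
  -- mean equation
  have hSP1 : (n : ℝ) * SP = N * A := by
    calc (n : ℝ) * SP = ∑ i, ((n : ℝ) * ∑ π : Equiv.Perm (Fin n), c i (π i)) := by
          rw [hSPdef, Finset.sum_comm, Finset.mul_sum]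
      _ = ∑ i, (N * ∑ j, c i j) := Finset.sum_congr rfl fun i _ => by
          rw [sum_perm_one i (c i), ← hNdef]
      _ = N * A := by rw [hAdef, Finset.mul_sum]
  -- first part of second moment
  have hF1 : (n : ℝ) * F1 = N * B := by
    calc (n : ℝ) * F1 = ∑ i, ((n : ℝ) * ∑ π : Equiv.Perm (Fin n), (c i (π i)) ^ 2) := by
          rw [hF1def, Finset.sum_comm, Finset.mul_sum]
      _ = ∑ i, (N * ∑ j, (c i j) ^ 2) := Finset.sum_congr rfl fun i _ => by
          rw [sum_perm_one i (fun j => (c i j) ^ 2), ← hNdef]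
      _ = N * B := by rw [hBdef, Finset.mul_sum]
  -- second part of second moment
  have hF2 : ((n * n - n : ℕ) : ℝ) * F2 = N * T := by
    calc ((n * n - n : ℕ) : ℝ) * F2
        = ∑ p ∈ (Finset.univ : Finset (Fin n)).offDiag,
            (((n * n - n : ℕ) : ℝ) * ∑ π : Equiv.Perm (Fin n),
              c p.1 (π p.1) * c p.2 (π p.2)) := by
          rw [hF2def, Finset.sum_comm, Finset.mul_sum]
      _ = ∑ p ∈ (Finset.univ : Finset (Fin n)).offDiag,
            (N * ∑ q ∈ (Finset.univ : Finset (Fin n)).offDiag, c p.1 q.1 * c p.2 q.2) := by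
          refine Finset.sum_congr rfl fun p hp => ?_
          rw [sum_perm_two (Finset.mem_offDiag.mp hp).2.2 (fun j l => c p.1 j * c p.2 l),
            ← hNdef]
      _ = N * T := by rw [hTdef, Finset.mul_sum]
  have hT : T = A ^ 2 - P - Q + B := by
    rw [hTdef, T_expand c, ← hAdef, ← hPdef, ← hQdef, ← hBdef]
  -- second moment decomposition
  have hS2 : ∑ π : Equiv.Perm (Fin n), (∑ i, c i (π i)) ^ 2 = F1 + F2 := by
    rw [hF1def, hF2def, ← Finset.sum_add_distrib]
    refine Finset.sum_congr rfl fun π _ => ?_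
    rw [offDiag_split (fun i k => c i (π i) * c k (π k)), ← Finset.sum_mul_sum, ← sq]
    have : ∑ i, c i (π i) * c i (π i) = ∑ i, (c i (π i)) ^ 2 :=
      Finset.sum_congr rfl fun i _ => (sq _).symm
    rw [this]
    ring
  -- variance decomposition
  have hvar : ∑ π : Equiv.Perm (Fin n), ((∑ i, c i (π i)) - N⁻¹ * SP) ^ 2
      = (∑ π : Equiv.Perm (Fin n), (∑ i, c i (π i)) ^ 2) - N * (N⁻¹ * SP) ^ 2 := by
    have expand : ∀ π : Equiv.Perm (Fin n), ((∑ i, c i (π i)) - N⁻¹ * SP) ^ 2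
        = (∑ i, c i (π i)) ^ 2 - 2 * (N⁻¹ * SP) * (∑ i, c i (π i)) + (N⁻¹ * SP) ^ 2 :=
      fun π => by ring
    rw [Finset.sum_congr rfl fun π _ => expand π, Finset.sum_add_distrib,
      Finset.sum_sub_distrib, ← Finset.mul_sum, ← hSPdef, Finset.sum_const,
      Finset.card_univ, Fintype.card_perm, Fintype.card_fin, nsmul_eq_mul, ← hNdef]
    have hNN : N * N⁻¹ = 1 := mul_inv_cancel₀ hN
    linear_combination (2 * N⁻¹ * SP ^ 2) * hNN
  rw [hvar, hS2]
  -- final algebra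
  have hcast : ((n * n - n : ℕ) : ℝ) = (n : ℝ) * (n : ℝ) - (n : ℝ) := by
    have h : n ≤ n * n := Nat.le_mul_of_pos_left n (by omega)
    push_cast [Nat.cast_sub h]
    ring
  rw [hcast, hT] at hF2
  have hnn : (n : ℝ) * (n : ℝ) - (n : ℝ) ≠ 0 := by
    have : (n : ℝ) * (n : ℝ) - (n : ℝ) = (n : ℝ) * ((n : ℝ) - 1) := by ring
    rw [this]
    exact mul_ne_zero hn0 hn1
  have eSP : SP = N * A / (n : ℝ) := by rw [eq_div_iff hn0]; linarith [hSP1]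
  have eF1 : F1 = N * B / (n : ℝ) := by rw [eq_div_iff hn0]; linarith [hF1]
  have eF2 : F2 = N * (A ^ 2 - P - Q + B) / ((n : ℝ) * (n : ℝ) - (n : ℝ)) := by
    rw [eq_div_iff hnn]; linarith [hF2]
  rw [eSP, eF1, eF2]
  field_simp
  ring
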